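/- Fix ε > 0. Let η¹, η², ηᵐⁱⁿ, ηᵐᵃˣ : ℤ → ℤ take values in {0,1} and satisfy, for every x ∈ ℤ, ηᵐⁱⁿ(x) ≤ min(η¹(x), η²(x)) and max(η¹(x), η²(x)) ≤ ηᵐᵃˣ(x). Let h¹, h², hᵐⁱⁿ, hᵐᵃˣ : ℤ → ℤ be height functions for the respective configurations, i.e. h(x) − h(x−1) = 2η(x) − 1 for the corresponding η and all x ∈ ℤ. Define f : ℝ → ℝ by f(x) = √ε·(h¹(⌊ε⁻¹x⌋) − h²(⌊ε⁻¹x⌋)). Then for all real numbers a ≤ b, the total variation of f on [a, b] is at most √ε·[(hᵐᵃˣ(⌊ε⁻¹b⌋) − hᵐᵃˣ(⌊ε⁻¹a⌋)) − (hᵐⁱⁿ(⌊ε⁻¹b⌋) − hᵐⁱⁿ(⌊ε⁻¹a⌋))]. -/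

import Mathlib

/-- Prelimit form of Theorem 1.1: the total variation on `[a, b]` of the difference of
the diffusively rescaled height functions of two sandwiched configurations is bounded by
the difference of the rescaled increments of the extreme height functions. -/
theorem eVariationOn_rescaled_height_diff_le
    (ε : ℝ) (hε : 0 < ε)
    (η₁ η₂ ηmin ηmax : ℤ → ℤ)
    (hη₁ : ∀ x, η₁ x = 0 ∨ η₁ x = 1) (hη₂ : ∀ x, η₂ x = 0 ∨ η₂ x = 1)
    (hηmin : ∀ x, ηmin x = 0 ∨ ηmin x = 1) (hηmax : ∀ x, ηmax x = 0 ∨ ηmax x = 1)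
    (hsand : ∀ x : ℤ, ηmin x ≤ min (η₁ x) (η₂ x) ∧ max (η₁ x) (η₂ x) ≤ ηmax x)
    (h₁ h₂ hmin hmax : ℤ → ℤ)
    (hh₁ : ∀ x : ℤ, h₁ x - h₁ (x - 1) = 2 * η₁ x - 1)
    (hh₂ : ∀ x : ℤ, h₂ x - h₂ (x - 1) = 2 * η₂ x - 1)
    (hhmin : ∀ x : ℤ, hmin x - hmin (x - 1) = 2 * ηmin x - 1)
    (hhmax : ∀ x : ℤ, hmax x - hmax (x - 1) = 2 * ηmax x - 1)
    (a b : ℝ) (hab : a ≤ b) :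
    eVariationOn
        (fun x : ℝ => Real.sqrt ε * ((h₁ ⌊ε⁻¹ * x⌋ : ℝ) - (h₂ ⌊ε⁻¹ * x⌋ : ℝ)))
        (Set.Icc a b) ≤
      ENNReal.ofReal (Real.sqrt ε *
        (((hmax ⌊ε⁻¹ * b⌋ : ℝ) - (hmax ⌊ε⁻¹ * a⌋ : ℝ))
          - ((hmin ⌊ε⁻¹ * b⌋ : ℝ) - (hmin ⌊ε⁻¹ * a⌋ : ℝ)))) := by
  set D : ℤ → ℤ := fun x => hmax x - hmin x with hD
  have sε : (0:ℝ) ≤ Real.sqrt ε := Real.sqrt_nonneg ε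
  have hinv : (0:ℝ) ≤ ε⁻¹ := le_of_lt (inv_pos.mpr hε)
  have Dmono : Monotone D := by
    refine monotone_int_of_le_succ (fun z => ?_)
    have h3 := hhmax (z + 1); have h4 := hhmin (z + 1)
    have h5 := le_min_iff.mp (hsand (z + 1)).1
    have h6 := max_le_iff.mp (hsand (z + 1)).2
    simp only [add_sub_cancel_right] at h3 h4
    simp only [hD]; omega
  have gbound : ∀ x y : ℤ, x ≤ y →
      |(h₁ y - h₂ y) - (h₁ x - h₂ x)| ≤ D y - D x := by
    intro x y hxy
    refine Int.le_induction (motive := fun z _ => |h₁ z - h₂ z - (h₁ x - h₂ x)| ≤ D z - D x) ?_ ?_ y hxy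
    · simp
    · intro y hxy ih
      have hs : |(h₁ (y+1) - h₂ (y+1)) - (h₁ y - h₂ y)| ≤ D (y+1) - D y := by
        have h1 := hh₁ (y+1); have h2 := hh₂ (y+1)
        have h3 := hhmax (y+1); have h4 := hhmin (y+1)
        have h5 := le_min_iff.mp (hsand (y+1)).1
        have h6 := max_le_iff.mp (hsand (y+1)).2
        simp only [add_sub_cancel_right] at h1 h2 h3 h4
        rw [abs_le]; constructor <;> simp only [hD] <;> omega
      calc |(h₁ (y+1) - h₂ (y+1)) - (h₁ x - h₂ x)|
          ≤ |(h₁ (y+1) - h₂ (y+1)) - (h₁ y - h₂ y)|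
              + |(h₁ y - h₂ y) - (h₁ x - h₂ x)| := abs_sub_le _ _ _
        _ ≤ (D (y+1) - D y) + (D y - D x) := add_le_add hs ih
        _ = D (y+1) - D x := by ring
  set f : ℝ → ℝ := fun x : ℝ =>
    Real.sqrt ε * ((h₁ ⌊ε⁻¹ * x⌋ : ℝ) - (h₂ ⌊ε⁻¹ * x⌋ : ℝ)) with hf
  set F : ℝ → ℝ := fun x : ℝ => Real.sqrt ε * ((D ⌊ε⁻¹ * x⌋ : ℝ)) with hF
  have key : ∀ x y : ℝ, x ≤ y → dist (f y) (f x) ≤ F y - F x := by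
    intro x y hxy
    have hfl : ⌊ε⁻¹ * x⌋ ≤ ⌊ε⁻¹ * y⌋ :=
      Int.floor_le_floor (mul_le_mul_of_nonneg_left hxy hinv)
    have hg := gbound _ _ hfl
    have hg' : |((h₁ ⌊ε⁻¹ * y⌋ - h₂ ⌊ε⁻¹ * y⌋ : ℤ) : ℝ)
        - ((h₁ ⌊ε⁻¹ * x⌋ - h₂ ⌊ε⁻¹ * x⌋ : ℤ) : ℝ)|
        ≤ ((D ⌊ε⁻¹ * y⌋ : ℤ) : ℝ) - ((D ⌊ε⁻¹ * x⌋ : ℤ) : ℝ) := by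
      rw [← Int.cast_sub, ← Int.cast_sub, ← Int.cast_abs]
      exact_mod_cast hg
    rw [Real.dist_eq, hf, hF]
    have hg'' : ((h₁ ⌊ε⁻¹ * y⌋ : ℝ) - (h₂ ⌊ε⁻¹ * y⌋ : ℝ))
        - ((h₁ ⌊ε⁻¹ * x⌋ : ℝ) - (h₂ ⌊ε⁻¹ * x⌋ : ℝ))
        ≤ ((D ⌊ε⁻¹ * y⌋ : ℤ) : ℝ) - ((D ⌊ε⁻¹ * x⌋ : ℤ) : ℝ) ∧
        -(((h₁ ⌊ε⁻¹ * y⌋ : ℝ) - (h₂ ⌊ε⁻¹ * y⌋ : ℝ))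
        - ((h₁ ⌊ε⁻¹ * x⌋ : ℝ) - (h₂ ⌊ε⁻¹ * x⌋ : ℝ)))
        ≤ ((D ⌊ε⁻¹ * y⌋ : ℤ) : ℝ) - ((D ⌊ε⁻¹ * x⌋ : ℤ) : ℝ) := by
      constructor <;> push_cast at hg' ⊢ <;>
        [linarith [abs_le.mp hg'] ; linarith [abs_le.mp hg']]
    calc |Real.sqrt ε * ((h₁ ⌊ε⁻¹ * y⌋ : ℝ) - (h₂ ⌊ε⁻¹ * y⌋ : ℝ))
            - Real.sqrt ε * ((h₁ ⌊ε⁻¹ * x⌋ : ℝ) - (h₂ ⌊ε⁻¹ * x⌋ : ℝ))|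
        = Real.sqrt ε * |((h₁ ⌊ε⁻¹ * y⌋ : ℝ) - (h₂ ⌊ε⁻¹ * y⌋ : ℝ))
            - ((h₁ ⌊ε⁻¹ * x⌋ : ℝ) - (h₂ ⌊ε⁻¹ * x⌋ : ℝ))| := by
          rw [← mul_sub, abs_mul, abs_of_nonneg sε]
      _ ≤ Real.sqrt ε * (((D ⌊ε⁻¹ * y⌋ : ℤ) : ℝ) - ((D ⌊ε⁻¹ * x⌋ : ℤ) : ℝ)) := by
          apply mul_le_mul_of_nonneg_left _ sε
          rw [abs_le]
          exact ⟨by linarith [hg''.2], hg''.1⟩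
      _ = Real.sqrt ε * ((D ⌊ε⁻¹ * y⌋ : ℤ) : ℝ)
            - Real.sqrt ε * ((D ⌊ε⁻¹ * x⌋ : ℤ) : ℝ) := by ring
  rw [eVariationOn]
  refine iSup_le ?_
  rintro ⟨n, u, hu, hus⟩
  have hsum : ∀ i ∈ Finset.range n,
      edist (f (u (i+1))) (f (u i)) ≤ ENNReal.ofReal ((F ∘ u) (i+1) - (F ∘ u) i) := by
    intro i _
    rw [edist_dist]
    exact ENNReal.ofReal_le_ofReal (key _ _ (hu (Nat.le_succ i)))
  calc ∑ i ∈ Finset.range n, edist (f (u (i+1))) (f (u i))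
      ≤ ∑ i ∈ Finset.range n, ENNReal.ofReal ((F ∘ u) (i+1) - (F ∘ u) i) :=
        Finset.sum_le_sum hsum
    _ = ENNReal.ofReal (∑ i ∈ Finset.range n, ((F ∘ u) (i+1) - (F ∘ u) i)) := by
        rw [ENNReal.ofReal_sum_of_nonneg]
        intro i _
        have := key (u i) (u (i+1)) (hu (Nat.le_succ i))
        have := dist_nonneg (x := f (u (i+1))) (y := f (u i))
        simp only [Function.comp]
        linarith
    _ = ENNReal.ofReal ((F ∘ u) n - (F ∘ u) 0) := by
        rw [Finset.sum_range_sub]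
    _ ≤ _ := by
        apply ENNReal.ofReal_le_ofReal
        have h0 : a ≤ u 0 := (hus 0).1
        have hn : u n ≤ b := (hus n).2
        have hfa : ⌊ε⁻¹ * a⌋ ≤ ⌊ε⁻¹ * u 0⌋ :=
          Int.floor_le_floor (mul_le_mul_of_nonneg_left h0 hinv)
        have hfb : ⌊ε⁻¹ * u n⌋ ≤ ⌊ε⁻¹ * b⌋ :=
          Int.floor_le_floor (mul_le_mul_of_nonneg_left hn hinv)
        have hDa : ((D ⌊ε⁻¹ * a⌋ : ℤ) : ℝ) ≤ ((D ⌊ε⁻¹ * u 0⌋ : ℤ) : ℝ) := by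
          exact_mod_cast Dmono hfa
        have hDb : ((D ⌊ε⁻¹ * u n⌋ : ℤ) : ℝ) ≤ ((D ⌊ε⁻¹ * b⌋ : ℤ) : ℝ) := by
          exact_mod_cast Dmono hfb
        have e1 : ∀ z : ℤ, ((D z : ℤ) : ℝ) = (hmax z : ℝ) - (hmin z : ℝ) := by
          intro z; simp [hD]
        simp only [Function.comp, hF]
        rw [e1, e1] at hDa hDb ⊢
        nlinarith [sε]
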